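/- Let M_0 be a subset of Z^* of cardinality d, and let d' be an integer. Assume d ≤ z, z − d = z' + d + 1 or z − d = z' + d − 1, and −z' ≤ d' ≤ z. Then ∑_N (−1)^{card(N ∩ Z_*) + card(N ∩ M_0)} ≠ 0, where the sum runs over all subsets N of Z with card(N ∩ Z^*) = card(N ∩ Z_*) + d' (equality of integers). -/

import Mathlib

open Polynomial

set_option maxRecDepth 10000


lemma coeff_sq_pow (m k : ℕ) :
    ((1 - X^2 : Polynomial ℤ)^m).coeff k =
      if k % 2 = 0 ∧ k ≤ 2*m then (-1 : ℤ)^(k/2) * (m.choose (k/2) : ℤ) else 0 := by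
  have h : (1 - X^2 : Polynomial ℤ) = (-X^2) + 1 := by ring
  rw [h, add_pow]
  rw [finset_sum_coeff]
  have hterm : ∀ j ∈ Finset.range (m+1),
      ((-X^2 : Polynomial ℤ)^j * 1^(m-j) * (m.choose j : Polynomial ℤ)).coeff k
      = if 2*j = k then (-1:ℤ)^j * (m.choose j : ℤ) else 0 := by
    intro j _
    have : ((-X^2 : Polynomial ℤ)^j * 1^(m-j) * (m.choose j : Polynomial ℤ))
        = C ((-1:ℤ)^j * (m.choose j : ℤ)) * X^(2*j) := by
      rw [map_mul, map_pow, map_neg, map_one, map_natCast]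
      ring
    rw [this, coeff_C_mul, coeff_X_pow]
    by_cases hjk : 2*j = k
    · simp [hjk]
    · rw [if_neg (fun h' => hjk h'.symm), if_neg hjk, mul_zero]
  rw [Finset.sum_congr rfl hterm]
  by_cases hk : k % 2 = 0 ∧ k ≤ 2*m
  · rw [if_pos hk, Finset.sum_eq_single (k/2)]
    · rw [if_pos (by omega)]
    · intro j _ hj
      rw [if_neg (by omega)]
    · intro hmem
      exact absurd (Finset.mem_range.mpr (by omega)) hmem
  · rw [if_neg hk, Finset.sum_eq_zero]
    intro j hj
    rw [if_neg (by rw [Finset.mem_range] at hj; omega)]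

lemma coeff_mul_X' (p : Polynomial ℤ) (n : ℕ) :
    (p * X).coeff n = if n = 0 then 0 else p.coeff (n-1) := by
  cases n with
  | zero => simp [mul_coeff_zero]
  | succ j => rw [coeff_mul_X]; simp

lemma hc (m j : ℕ) (hj : j ≤ m) : (m.choose j : ℤ) ≠ 0 := by
  exact_mod_cast (Nat.choose_pos hj).ne'

lemma lemA (m n : ℕ) (hn : n ≤ 2*m+1) :
    (((1 - X^2 : Polynomial ℤ)^m) * (1 + X)).coeff n ≠ 0 := by
  rw [mul_add, mul_one, coeff_add, coeff_mul_X', coeff_sq_pow, coeff_sq_pow]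
  rcases Nat.even_or_odd n with he | ho
  · have h1 : n % 2 = 0 := Nat.even_iff.mp he
    rw [if_pos ⟨h1, by omega⟩]
    by_cases h0 : n = 0
    · rw [if_pos h0, add_zero]
      exact mul_ne_zero (pow_ne_zero _ (by norm_num)) (hc m _ (by omega))
    · rw [if_neg h0, if_neg (by omega), add_zero]
      exact mul_ne_zero (pow_ne_zero _ (by norm_num)) (hc m _ (by omega))
  · have h1 : n % 2 = 1 := Nat.odd_iff.mp ho
    rw [if_neg (show ¬(n % 2 = 0 ∧ n ≤ 2*m) by omega), if_neg (show ¬ n = 0 by omega),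
      if_pos (show (n-1)%2 = 0 ∧ n-1 ≤ 2*m by omega), zero_add]
    exact mul_ne_zero (pow_ne_zero _ (by norm_num)) (hc m _ (by omega))

lemma lemB (m n : ℕ) (hn : n ≤ 2*m+1) :
    (((1 - X : Polynomial ℤ)) * ((1 - X^2)^m)).coeff n ≠ 0 := by
  rw [sub_mul, one_mul, coeff_sub, mul_comm, coeff_mul_X', coeff_sq_pow, coeff_sq_pow]
  rcases Nat.even_or_odd n with he | ho
  · have h1 : n % 2 = 0 := Nat.even_iff.mp he
    rw [if_pos ⟨h1, by omega⟩]
    by_cases h0 : n = 0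
    · rw [if_pos h0, sub_zero]
      exact mul_ne_zero (pow_ne_zero _ (by norm_num)) (hc m _ (by omega))
    · rw [if_neg h0, if_neg (by omega), sub_zero]
      exact mul_ne_zero (pow_ne_zero _ (by norm_num)) (hc m _ (by omega))
  · have h1 : n % 2 = 1 := Nat.odd_iff.mp ho
    rw [if_neg (show ¬(n % 2 = 0 ∧ n ≤ 2*m) by omega), if_neg (show ¬ n = 0 by omega),
      if_pos (show (n-1)%2 = 0 ∧ n-1 ≤ 2*m by omega), zero_sub, neg_ne_zero]
    exact mul_ne_zero (pow_ne_zero _ (by norm_num)) (hc m _ (by omega))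

theorem stmt_8 {α : Type*} [DecidableEq α] [Fintype α]
    (Zstar Zsub : Finset α) (hdisj : Disjoint Zstar Zsub)
    (hunion : Zstar ∪ Zsub = Finset.univ)
    (z z' : ℕ) (hz : Zstar.card = z) (hz' : Zsub.card = z')
    (M0 : Finset α) (hM0 : M0 ⊆ Zstar) (d : ℕ) (hd : M0.card = d)
    (d' : ℤ)
    (hdz : d ≤ z)
    (hpm : (z : ℤ) - d = (z' : ℤ) + d + 1 ∨ (z : ℤ) - d = (z' : ℤ) + d - 1)
    (hd'1 : -(z' : ℤ) ≤ d') (hd'2 : d' ≤ (z : ℤ)) :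
    ∑ N ∈ Finset.univ.filter (fun N : Finset α =>
        ((N ∩ Zstar).card : ℤ) = ((N ∩ Zsub).card : ℤ) + d'),
      (-1 : ℤ) ^ ((N ∩ Zsub).card + (N ∩ M0).card) ≠ 0 := by
  classical
  set n : ℕ := (↑z' + d').toNat with hndef
  have hn : (n : ℤ) = (z' : ℤ) + d' := Int.toNat_of_nonneg (by omega)
  set f : α → Polynomial ℤ :=
    fun i => if i ∈ M0 then -X else if i ∈ Zstar then X else -1 with hf
  set g : α → Polynomial ℤ := fun i => if i ∈ Zstar then 1 else X with hg
  set P : Polynomial ℤ := ∏ i : α, (f i + g i) with hP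
  -- step 2 : coeff n of P equals the sum
  have hdisjM0 : ∀ i ∈ Zsub, i ∉ M0 := fun i hi hm =>
    (Finset.disjoint_left.mp hdisj) (hM0 hm) hi
  have hdisj' : ∀ i ∈ Zsub, i ∉ Zstar := fun i hi hm =>
    (Finset.disjoint_left.mp hdisj) hm hi
  have hterm : ∀ N : Finset α, (∏ i ∈ N, f i) * (∏ i ∈ Finset.univ \ N, g i)
      = C ((-1:ℤ)^((N ∩ Zsub).card + (N ∩ M0).card))
          * X^((N ∩ Zstar).card + (z' - (N ∩ Zsub).card)) := by
    intro N
    have hNsplit : N ∩ Zstar ∪ N ∩ Zsub = N := by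
      rw [← Finset.inter_union_distrib_left, hunion, Finset.inter_univ]
    have hNdisj : Disjoint (N ∩ Zstar) (N ∩ Zsub) :=
      hdisj.mono Finset.inter_subset_right Finset.inter_subset_right
    have h1 : (∏ i ∈ N, f i) = (∏ i ∈ N ∩ Zstar, f i) * (∏ i ∈ N ∩ Zsub, f i) := by
      rw [← Finset.prod_union hNdisj, hNsplit]
    have hsub : N ∩ M0 ⊆ N ∩ Zstar :=
      Finset.inter_subset_inter le_rfl hM0
    have h2 : (∏ i ∈ N ∩ Zstar, f i)
        = (∏ i ∈ (N ∩ Zstar) \ (N ∩ M0), f i) * (∏ i ∈ N ∩ M0, f i) :=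
      (Finset.prod_sdiff hsub).symm
    have h3 : (∏ i ∈ N ∩ M0, f i) = (-X)^((N ∩ M0).card) := by
      rw [Finset.prod_congr rfl (fun i hi => ?_), Finset.prod_const]
      have him : i ∈ M0 := (Finset.mem_inter.mp hi).2
      simp [hf, him]
    have h4 : (∏ i ∈ (N ∩ Zstar) \ (N ∩ M0), f i)
        = X^((N ∩ Zstar).card - (N ∩ M0).card) := by
      rw [Finset.prod_congr rfl (fun i hi => ?_), Finset.prod_const,
        Finset.card_sdiff_of_subset hsub]
      rw [Finset.mem_sdiff] at hi
      have h5 : i ∈ Zstar := (Finset.mem_inter.mp hi.1).2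
      have h6 : i ∉ M0 := fun hm => hi.2 (Finset.mem_inter.mpr ⟨(Finset.mem_inter.mp hi.1).1, hm⟩)
      simp [hf, h5, h6]
    have h7 : (∏ i ∈ N ∩ Zsub, f i) = (-1)^((N ∩ Zsub).card) := by
      rw [Finset.prod_congr rfl (fun i hi => ?_), Finset.prod_const]
      have hi' : i ∈ Zsub := (Finset.mem_inter.mp hi).2
      simp [hf, hdisjM0 i hi', hdisj' i hi']
    have h8 : (∏ i ∈ Finset.univ \ N, g i) = X^(z' - (N ∩ Zsub).card) := by
      have hsplit2 : (Finset.univ \ N) ∩ Zstar ∪ (Finset.univ \ N) ∩ Zsub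
          = Finset.univ \ N := by
        rw [← Finset.inter_union_distrib_left, hunion, Finset.inter_univ]
      have hd2 : Disjoint ((Finset.univ \ N) ∩ Zstar) ((Finset.univ \ N) ∩ Zsub) :=
        hdisj.mono Finset.inter_subset_right Finset.inter_subset_right
      rw [← hsplit2, Finset.prod_union hd2]
      have e1 : (∏ i ∈ (Finset.univ \ N) ∩ Zstar, g i) = 1 := by
        rw [Finset.prod_congr rfl (fun i hi => ?_), Finset.prod_const, one_pow]
        simp [hg, (Finset.mem_inter.mp hi).2]
      have e2 : (∏ i ∈ (Finset.univ \ N) ∩ Zsub, g i)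
          = X^(z' - (N ∩ Zsub).card) := by
        rw [Finset.prod_congr rfl (fun i hi => ?_), Finset.prod_const]
        · congr 1
          have : (Finset.univ \ N) ∩ Zsub = Zsub \ (N ∩ Zsub) := by
            ext i; simp [Finset.mem_sdiff, Finset.mem_inter]; tauto
          rw [this, Finset.card_sdiff_of_subset (Finset.inter_subset_right), hz']
        · simp [hg, hdisj' i (Finset.mem_inter.mp hi).2]
      rw [e1, e2, one_mul]
    rw [h1, h2, h3, h4, h7, h8]
    have hjle : (N ∩ M0).card ≤ (N ∩ Zstar).card := Finset.card_le_card hsub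
    rw [neg_pow]
    rw [show ((N ∩ Zstar).card + (z' - (N ∩ Zsub).card))
        = ((N ∩ Zstar).card - (N ∩ M0).card) + (N ∩ M0).card + (z' - (N ∩ Zsub).card)
        by omega]
    rw [pow_add, pow_add, pow_add]
    simp only [map_mul, map_pow, map_neg, map_one, C_1]
    ring
  have hble : ∀ N : Finset α, (N ∩ Zsub).card ≤ z' := fun N => by
    rw [← hz']; exact Finset.card_le_card Finset.inter_subset_right
  have step2 : P.coeff n = ∑ N ∈ Finset.univ.filter (fun N : Finset α =>
        ((N ∩ Zstar).card : ℤ) = ((N ∩ Zsub).card : ℤ) + d'),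
      (-1 : ℤ) ^ ((N ∩ Zsub).card + (N ∩ M0).card) := by
    rw [hP, Finset.prod_add, Finset.powerset_univ, finset_sum_coeff]
    rw [Finset.sum_congr rfl (fun N _ => by
      rw [hterm N, coeff_C_mul, coeff_X_pow, mul_ite, mul_one, mul_zero])]
    rw [Finset.sum_filter]
    apply Finset.sum_congr rfl
    intro N _
    have hb := hble N
    exact if_congr (by omega) rfl rfl
  rw [← step2]
  -- step 1 : algebraic form of P
  have step1 : P = (1 - X)^d * (1 + X)^(z - d) * (X - 1)^z' := by
    rw [hP, ← hunion, Finset.prod_union hdisj, ← Finset.prod_sdiff hM0]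
    have e1 : (∏ i ∈ M0, (f i + g i)) = (1 - X)^d := by
      rw [Finset.prod_congr rfl (fun i hi => ?_), Finset.prod_const, hd]
      simp [hf, hg, hi, hM0 hi]
      ring
    have e2 : (∏ i ∈ Zstar \ M0, (f i + g i)) = (1 + X)^(z - d) := by
      rw [Finset.prod_congr rfl (fun i hi => ?_), Finset.prod_const,
        Finset.card_sdiff_of_subset hM0, hz, hd]
      rw [Finset.mem_sdiff] at hi
      simp [hf, hg, hi.1, hi.2]
      ring
    have e3 : (∏ i ∈ Zsub, (f i + g i)) = (X - 1)^z' := by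
      rw [Finset.prod_congr rfl (fun i hi => ?_), Finset.prod_const, hz']
      simp [hf, hg, hdisjM0 i hi, hdisj' i hi]
      ring
    rw [e1, e2, e3]
    ring

  rw [step1]
  rcases hpm with h | h
  · have hzd : z - d = (z' + d) + 1 := by omega
    have key : (1-X:Polynomial ℤ)^d * (1+X)^(z-d) * (X-1)^z'
        = C ((-1:ℤ)^z') * ((1 - X^2)^(z'+d) * (1+X)) := by
      rw [hzd, show (C ((-1:ℤ)^z') : Polynomial ℤ) = (-1)^z' by simp,
        show (1-X^2:Polynomial ℤ) = (1-X)*(1+X) by ring, mul_pow,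
        show (X-1:Polynomial ℤ) = (-1)*(1-X) by ring, mul_pow]
      ring
    rw [key, coeff_C_mul]
    exact mul_ne_zero (pow_ne_zero _ (by norm_num)) (lemA (z'+d) n (by omega))
  · have hdm : d + z' = (z - d) + 1 := by omega
    have e : (1-X:Polynomial ℤ)^d * (1-X)^z' = (1-X) * (1-X)^(z-d) := by
      rw [← pow_add, hdm, pow_succ']
    have key : (1-X:Polynomial ℤ)^d * (1+X)^(z-d) * (X-1)^z'
        = C ((-1:ℤ)^z') * ((1-X) * (1 - X^2)^(z-d)) := by
      rw [show (C ((-1:ℤ)^z') : Polynomial ℤ) = (-1)^z' by simp,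
        show (1-X^2:Polynomial ℤ) = (1-X)*(1+X) by ring, mul_pow,
        show (X-1:Polynomial ℤ) = (-1)*(1-X) by ring, mul_pow]
      calc (1-X:Polynomial ℤ)^d * (1+X)^(z-d) * ((-1)^z' * (1-X)^z')
          = (-1)^z' * (((1-X)^d * (1-X)^z') * (1+X)^(z-d)) := by ring
        _ = (-1)^z' * (((1-X) * (1-X)^(z-d)) * (1+X)^(z-d)) := by rw [e]
        _ = (-1)^z' * ((1-X) * ((1-X)^(z-d) * (1+X)^(z-d))) := by ring
    rw [key, coeff_C_mul]
    exact mul_ne_zero (pow_ne_zero _ (by norm_num)) (lemB (z-d) n (by omega))
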